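/- Combinatorial form of Corollary 6 (M(C, C') = M(C', C)^{-1}): let G be a simple graph on a finite vertex set V and v₁, …, v_k a finite sequence of vertices. Define G₀ = G, G_i = (G_{i-1})^{v_i}; let φ̄ be the constant transition function with value φ, and define s₀ = φ̄, s_i = (s_{i-1})^{G_{i-1}, v_i} for 1 ≤ i ≤ k. Now apply the reversed sequence starting from G_k: define H₀ = G_k, u₀ = φ̄, and H_j = (H_{j-1})^{v_{k+1-j}}, u_j = (u_{j-1})^{H_{j-1}, v_{k+1-j}} for 1 ≤ j ≤ k. Then H_k = G and M(H_k, u_k) · M(G_k, s_k) = I = M(G_k, s_k) · M(H_k, u_k); that is, M(H_k, u_k) = M(G_k, s_k)^{-1}. -/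

import Mathlib

open scoped Classical

/-- The three transitions at a vertex, labeled relative to an Euler system. -/
inductive Transition : Type
  | phi | chi | psi
  deriving DecidableEq

variable {V : Type*} [Fintype V] [DecidableEq V]

/-- Simple local complement `G^v`: toggle adjacency between distinct neighbors of `v`. -/
def localComp (G : SimpleGraph V) (v : V) : SimpleGraph V where
  Adj u w := u ≠ w ∧ Xor' (G.Adj u w) (G.Adj v u ∧ G.Adj v w)
  symm := by
    constructor
    rintro u w ⟨hne, hx⟩
    refine ⟨hne.symm, ?_⟩
    rw [G.adj_comm w u, and_comm]
    exact hx
  loopless := by constructor; rintro u ⟨hne, _⟩; exact hne rfl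

/-- Modified interlacement matrix `M(G, t)` over GF(2). -/
noncomputable def Mmat (G : SimpleGraph V) (t : V → Transition) : Matrix V V (ZMod 2) :=
  Matrix.of fun w u =>
    if w = u then (if t u = Transition.chi then 0 else 1)
    else if t u = Transition.phi then 0
    else if G.Adj w u then 1 else 0

/-- Updated transition function `t^{G,v}`. -/
noncomputable def updT (G : SimpleGraph V) (v : V) (t : V → Transition) : V → Transition :=
  fun u =>
    if u = v then
      match t u with
      | Transition.phi => Transition.psi
      | Transition.psi => Transition.phi
      | Transition.chi => Transition.chi
    else if G.Adj v u then
      match t u with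
      | Transition.chi => Transition.psi
      | Transition.psi => Transition.chi
      | Transition.phi => Transition.phi
    else t u

/-- Modified local complement of a matrix, taken with respect to `G` at `v`:
add row `v` to the row of every neighbor of `v` in `G`. -/
noncomputable def modLC (G : SimpleGraph V) (v : V) (M : Matrix V V (ZMod 2)) :
    Matrix V V (ZMod 2) :=
  Matrix.of fun w u => if G.Adj v w then M w u + M v u else M w u

/-- One κ-step at `v` applied to a graph together with a transition function:
`(G, s) ↦ (G^v, s^{G,v})`. -/
noncomputable def stepGT (v : V) (p : SimpleGraph V × (V → Transition)) :
    SimpleGraph V × (V → Transition) :=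
  (localComp p.1 v, updT p.1 v p.2)


section Aux

variable {V : Type*} [Fintype V] [DecidableEq V]

set_option linter.unusedSectionVars false

lemma localComp_adj_left (G : SimpleGraph V) (v w : V) :
    (localComp G v).Adj v w ↔ G.Adj v w := by
  constructor
  · rintro ⟨hne, h⟩
    simpa [Xor', Xor, SimpleGraph.irrefl] using h
  · intro h
    exact ⟨G.ne_of_adj h, by simp [Xor', Xor, SimpleGraph.irrefl, h]⟩

lemma localComp_localComp (G : SimpleGraph V) (v : V) :
    localComp (localComp G v) v = G := by
  ext u w
  have h1 : G.Adj v u → ¬ v = u := fun h => G.ne_of_adj h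
  have h2 : G.Adj v w → ¬ v = w := fun h => G.ne_of_adj h
  by_cases huw : u = w
  · subst huw; simp [localComp]
  · by_cases hu : G.Adj v u <;> by_cases hw : G.Adj v w <;> by_cases ha : G.Adj u w <;>
      simp_all [localComp, Xor']

lemma modLC_modLC (G : SimpleGraph V) (v : V) (M : Matrix V V (ZMod 2)) :
    modLC G v (modLC G v M) = M := by
  ext w u
  simp only [modLC, Matrix.of_apply]
  by_cases h : G.Adj v w
  · simp [h, SimpleGraph.irrefl, add_assoc, CharTwo.add_self_eq_zero]
  · simp [h]

lemma modLC_mul (G : SimpleGraph V) (v : V) (M N : Matrix V V (ZMod 2)) :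
    modLC G v (M * N) = modLC G v M * N := by
  ext w u
  simp only [modLC, Matrix.of_apply, Matrix.mul_apply]
  by_cases h : G.Adj v w
  · simp [h, ← Finset.sum_add_distrib, add_mul]
  · simp [h]

/-- Elementary matrix of the step at `v` (depends only on the neighbors of `v`). -/
noncomputable def Emat (G : SimpleGraph V) (v : V) : Matrix V V (ZMod 2) :=
  modLC G v 1

lemma modLC_eq_mul (G : SimpleGraph V) (v : V) (M : Matrix V V (ZMod 2)) :
    modLC G v M = Emat G v * M := by
  rw [Emat, ← modLC_mul, one_mul]

lemma Emat_mul_self (G : SimpleGraph V) (v : V) : Emat G v * Emat G v = 1 := by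
  rw [← modLC_eq_mul, Emat, modLC_modLC]

lemma Emat_localComp (G : SimpleGraph V) (v : V) : Emat (localComp G v) v = Emat G v := by
  unfold Emat modLC
  ext w u
  simp [localComp_adj_left]

set_option maxHeartbeats 1000000 in
/-- The key single-step identity. -/
lemma Mmat_step (G : SimpleGraph V) (v : V) (t : V → Transition) :
    Mmat (localComp G v) (updT G v t) = modLC G v (Mmat G t) := by
  ext w u
  have hadj : (localComp G v).Adj w u ↔ w ≠ u ∧ Xor' (G.Adj w u) (G.Adj v w ∧ G.Adj v u) :=
    Iff.rfl
  have h1' : G.Adj v u → ¬ u = v := fun h => (G.ne_of_adj h).symm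
  have h2' : G.Adj v w → ¬ w = v := fun h => (G.ne_of_adj h).symm
  have hsym : G.Adj w v ↔ G.Adj v w := G.adj_comm w v
  have e1 : (v = u) = (u = v) := propext eq_comm
  have e2 : (v = w) = (w = v) := propext eq_comm
  rcases htu : t u with _ | _ | _ <;>
    simp only [Mmat, modLC, updT, Matrix.of_apply, hadj, htu] <;>
    by_cases hwu : w = u <;> by_cases huv : u = v <;>
    by_cases hvu : G.Adj v u <;> by_cases hvw : G.Adj v w <;> by_cases hwa : G.Adj w u <;>
    simp_all [Xor', SimpleGraph.irrefl, e1, e2] <;> decide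

lemma Mmat_phi (G : SimpleGraph V) :
    Mmat G (fun _ => Transition.phi) = 1 := by
  ext w u
  by_cases h : w = u <;> simp [Mmat, Matrix.one_apply, h]

/-- Product of the elementary matrices along a sequence of local complementations. -/
noncomputable def Eprod : List V → SimpleGraph V → Matrix V V (ZMod 2)
  | [], _ => 1
  | v :: vs, G => Eprod vs (localComp G v) * Emat G v

lemma Eprod_nil (G : SimpleGraph V) : Eprod ([] : List V) G = 1 := rfl

lemma Eprod_cons (v : V) (vs : List V) (G : SimpleGraph V) :
    Eprod (v :: vs) G = Eprod vs (localComp G v) * Emat G v := rfl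

lemma fst_foldl (vs : List V) (G : SimpleGraph V) (t : V → Transition) :
    (vs.foldl (fun q v => stepGT v q) (G, t)).1 = vs.foldl localComp G := by
  induction vs generalizing G t with
  | nil => rfl
  | cons v vs ih => exact ih _ _

lemma Mmat_foldl (vs : List V) (G : SimpleGraph V) (t : V → Transition) :
    Mmat (vs.foldl (fun q v => stepGT v q) (G, t)).1
        (vs.foldl (fun q v => stepGT v q) (G, t)).2
      = Eprod vs G * Mmat G t := by
  induction vs generalizing G t with
  | nil => simp [Eprod_nil]
  | cons v vs ih =>
    have h1 : (v :: vs).foldl (fun q v => stepGT v q) (G, t)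
        = vs.foldl (fun q v => stepGT v q) (localComp G v, updT G v t) := rfl
    rw [h1, ih, Mmat_step, modLC_eq_mul, Eprod_cons, mul_assoc]

lemma foldl_localComp_reverse (vs : List V) (G : SimpleGraph V) :
    vs.reverse.foldl localComp (vs.foldl localComp G) = G := by
  induction vs generalizing G with
  | nil => rfl
  | cons v vs ih =>
    simp only [List.reverse_cons, List.foldl_append, List.foldl_cons, List.foldl_nil]
    rw [ih (localComp G v), localComp_localComp]

lemma Eprod_append (l₁ l₂ : List V) (G : SimpleGraph V) :
    Eprod (l₁ ++ l₂) G = Eprod l₂ (l₁.foldl localComp G) * Eprod l₁ G := by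
  induction l₁ generalizing G with
  | nil => simp [Eprod_nil]
  | cons v l₁ ih =>
    simp only [List.cons_append, Eprod_cons, List.foldl_cons]
    rw [ih, mul_assoc]

lemma Eprod_reverse_mul (vs : List V) (G : SimpleGraph V) :
    Eprod vs.reverse (vs.foldl localComp G) * Eprod vs G = 1 := by
  induction vs generalizing G with
  | nil => simp [Eprod_nil]
  | cons v vs ih =>
    simp only [List.reverse_cons, List.foldl_cons]
    rw [Eprod_append]
    rw [foldl_localComp_reverse vs (localComp G v)]
    have hE1 : Eprod [v] (localComp G v) = Emat (localComp G v) v := by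
      rw [Eprod_cons, Eprod_nil, one_mul]
    rw [hE1, Emat_localComp, Eprod_cons]
    rw [mul_assoc, ← mul_assoc (Eprod vs.reverse (vs.foldl localComp (localComp G v)))]
    rw [ih (localComp G v), one_mul, Emat_mul_self]

end Aux

/-- Corollary 6: run the κ-steps `v₁, …, v_k` starting from `(G, φ̄)` to get
`(G_k, s_k)`, then run the reversed sequence `v_k, …, v₁` starting from `(G_k, φ̄)` to get
`(H_k, u_k)`.  Then `H_k = G` and `M(H_k, u_k)` is the two-sided inverse of `M(G_k, s_k)`. -/
theorem Mmat_transition_inverse (G : SimpleGraph V) (vs : List V) :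
    let p := vs.foldl (fun q v => stepGT v q) (G, fun _ => Transition.phi)
    let q := vs.reverse.foldl (fun q v => stepGT v q) (p.1, fun _ => Transition.phi)
    q.1 = G ∧
    Mmat q.1 q.2 * Mmat p.1 p.2 = 1 ∧
    Mmat p.1 p.2 * Mmat q.1 q.2 = 1 := by
  intro p q
  have hp1 : p.1 = vs.foldl localComp G := fst_foldl vs G _
  have hMp : Mmat p.1 p.2 = Eprod vs G := by
    have := Mmat_foldl vs G (fun _ => Transition.phi)
    rwa [Mmat_phi, mul_one] at this
  have hq1 : q.1 = G := by
    show (vs.reverse.foldl (fun q v => stepGT v q) (p.1, fun _ => Transition.phi)).1 = G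
    rw [fst_foldl, hp1, foldl_localComp_reverse]
  have hMq : Mmat q.1 q.2 = Eprod vs.reverse p.1 := by
    have := Mmat_foldl vs.reverse p.1 (fun _ => Transition.phi)
    rwa [Mmat_phi, mul_one] at this
  have hmain : Mmat q.1 q.2 * Mmat p.1 p.2 = 1 := by
    rw [hMq, hMp, hp1]
    exact Eprod_reverse_mul vs G
  exact ⟨hq1, hmain, mul_eq_one_comm.mp hmain⟩
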